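/- Define V(σ,t) = α(μ - (1/√t) ∫_{√t Δq/σ}^∞ (σx - √t Δq) φ(x) dx) for σ > 0, t > 0, with φ the standard normal density and α, Δq > 0. Then ∂V/∂σ (σ,t) = -(α/√t) ∫_{√t Δq/σ}^∞ x φ(x) dx < 0. -/

import Mathlib

open MeasureTheory Real Filter

noncomputable def phi (x : ℝ) : ℝ := Real.exp (-x ^ 2 / 2) / Real.sqrt (2 * Real.pi)

noncomputable def Val (α μ Δq σ t : ℝ) : ℝ :=
  α * (μ - (1 / Real.sqrt t) *
    ∫ x in Set.Ioi (Real.sqrt t * Δq / σ), (σ * x - Real.sqrt t * Δq) * phi x)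

lemma phi_pos (x : ℝ) : 0 < phi x := by
  apply div_pos (Real.exp_pos _)
  exact Real.sqrt_pos.mpr (by positivity)

lemma continuous_phi : Continuous phi := by
  unfold phi
  fun_prop

lemma hasDerivAt_phi (x : ℝ) : HasDerivAt phi (-x * phi x) x := by
  have h1 : HasDerivAt (fun y : ℝ => -y ^ 2 / 2) (-x) x := by
    have := ((hasDerivAt_pow 2 x).neg).div_const 2
    refine this.congr_deriv ?_
    ring
  have h2 := h1.exp
  have h3 := h2.div_const (Real.sqrt (2 * Real.pi))
  refine h3.congr_deriv ?_
  unfold phi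
  ring

lemma integrable_phi : Integrable phi := by
  have : Integrable (fun x : ℝ => Real.exp (-(1/2) * x ^ 2)) := integrable_exp_neg_mul_sq (by norm_num)
  have h := this.div_const (Real.sqrt (2 * Real.pi))
  apply h.congr
  filter_upwards with x
  unfold phi
  ring_nf

lemma tendsto_phi_atTop : Tendsto phi atTop (nhds 0) := by
  have h1 : Tendsto (fun x : ℝ => -x ^ 2 / 2) atTop atBot := by
    apply Tendsto.atBot_div_const (by norm_num)
    exact tendsto_neg_atBot_iff.mpr (tendsto_pow_atTop (by norm_num))
  have h2 := (Real.tendsto_exp_atBot.comp h1).div_const (Real.sqrt (2 * Real.pi))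
  have : phi = fun x => Real.exp (-x ^ 2 / 2) / Real.sqrt (2 * Real.pi) := rfl
  rw [this]
  simpa [Function.comp] using h2

lemma integral_Ioi_id_mul_phi {a : ℝ} (ha : 0 ≤ a) :
    ∫ x in Set.Ioi a, x * phi x = phi a := by
  have hd : ∀ x ∈ Set.Ioi a, HasDerivAt (fun y => -phi y) (x * phi x) x := by
    intro x _
    have := (hasDerivAt_phi x).neg
    refine this.congr_deriv ?_; ring
  have hcont : ContinuousWithinAt (fun y => -phi y) (Set.Ici a) a :=
    (continuous_phi.neg).continuousWithinAt
  have hnn : ∀ x ∈ Set.Ioi a, 0 ≤ x * phi x := fun x hx =>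
    mul_nonneg (le_trans ha (le_of_lt hx)) (phi_pos x).le
  have htend : Tendsto (fun y => -phi y) atTop (nhds 0) := by
    simpa using tendsto_phi_atTop.neg
  have := integral_Ioi_of_hasDerivAt_of_nonneg hcont hd hnn htend
  rw [this]; ring

lemma integral_Ioi_lin (c s : ℝ) (hc : 0 < c) (hs : 0 < s) :
    ∫ x in Set.Ioi (c / s), (s * x - c) * phi x =
      s * phi (c / s) - c * ((∫ x in Set.Ioi (0:ℝ), phi x) - ∫ u in (0:ℝ)..(c / s), phi u) := by
  set a := c / s with ha
  have hFTC : ∀ x : ℝ, HasDerivAt (fun y => ∫ u in (0:ℝ)..y, phi u) (phi x) x := by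
    intro x
    exact intervalIntegral.integral_hasDerivAt_right
      (integrable_phi.intervalIntegrable)
      (continuous_phi.stronglyMeasurable.stronglyMeasurableAtFilter)
      (continuous_phi.continuousAt)
  have hd : ∀ x : ℝ, HasDerivAt
      (fun y => -(s * phi y) - c * ∫ u in (0:ℝ)..y, phi u) ((s * x - c) * phi x) x := by
    intro x
    have h1 := ((hasDerivAt_phi x).const_mul s).neg
    have h2 := (hFTC x).const_mul c
    have := h1.sub h2
    refine this.congr_deriv ?_; ring
  have hcont : ContinuousWithinAt (fun y => -(s * phi y) - c * ∫ u in (0:ℝ)..y, phi u)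
      (Set.Ici a) a := (hd a).continuousAt.continuousWithinAt
  have hnn : ∀ x ∈ Set.Ioi a, 0 ≤ (s * x - c) * phi x := by
    intro x hx
    apply mul_nonneg _ (phi_pos x).le
    have : c / s < x := hx
    nlinarith [(div_lt_iff₀ hs).mp this]
  have htend : Tendsto (fun y => -(s * phi y) - c * ∫ u in (0:ℝ)..y, phi u) atTop
      (nhds (-(s * 0) - c * ∫ x in Set.Ioi (0:ℝ), phi x)) := by
    apply Tendsto.sub
    · exact (tendsto_phi_atTop.const_mul s).neg
    · exact (intervalIntegral_tendsto_integral_Ioi 0 integrable_phi.integrableOn tendsto_id).const_mul c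
  have := integral_Ioi_of_hasDerivAt_of_nonneg hcont (fun x _ => hd x) hnn htend
  rw [this]; ring


lemma hasDerivAt_G (c σ : ℝ) (hσ : 0 < σ) :
    HasDerivAt (fun s => s * phi (c / s) -
        c * ((∫ x in Set.Ioi (0:ℝ), phi x) - ∫ u in (0:ℝ)..(c / s), phi u))
      (phi (c / σ)) σ := by
  have hinv : HasDerivAt (fun s : ℝ => c / s) (-(c / σ ^ 2)) σ := by
    have h := (hasDerivAt_inv (ne_of_gt hσ)).const_mul c
    simp only [div_eq_mul_inv]
    refine h.congr_deriv ?_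
    ring
  have hφc : HasDerivAt (fun s => phi (c / s))
      ((-(c / σ) * phi (c / σ)) * (-(c / σ ^ 2))) σ := (hasDerivAt_phi (c / σ)).comp σ hinv
  have h1 : HasDerivAt (fun s => s * phi (c / s))
      (1 * phi (c / σ) + σ * ((-(c / σ) * phi (c / σ)) * (-(c / σ ^ 2)))) σ :=
    (hasDerivAt_id σ).mul hφc
  have hFTC : HasDerivAt (fun y => ∫ u in (0:ℝ)..y, phi u) (phi (c / σ)) (c / σ) :=
    intervalIntegral.integral_hasDerivAt_right
      (integrable_phi.intervalIntegrable)
      (continuous_phi.stronglyMeasurable.stronglyMeasurableAtFilter)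
      (continuous_phi.continuousAt)
  have hF : HasDerivAt (fun s => ∫ u in (0:ℝ)..(c / s), phi u)
      (phi (c / σ) * (-(c / σ ^ 2))) σ := hFTC.comp σ hinv
  have h2 := ((hasDerivAt_const σ (∫ x in Set.Ioi (0:ℝ), phi x)).sub hF).const_mul c
  have := h1.sub h2
  refine this.congr_deriv ?_
  field_simp
  ring

theorem stmt_17 (α μ Δq σ t : ℝ) (hα : 0 < α) (hΔq : 0 < Δq)
    (hσ : 0 < σ) (ht : 0 < t) :
    HasDerivAt (fun s => Val α μ Δq s t)
      (-(α / Real.sqrt t) * ∫ x in Set.Ioi (Real.sqrt t * Δq / σ), x * phi x) σ ∧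
    -(α / Real.sqrt t) * (∫ x in Set.Ioi (Real.sqrt t * Δq / σ), x * phi x) < 0 := by
  set c := Real.sqrt t * Δq with hc
  have hcpos : 0 < c := mul_pos (Real.sqrt_pos.mpr ht) hΔq
  have hst : 0 < Real.sqrt t := Real.sqrt_pos.mpr ht
  have hint : (∫ x in Set.Ioi (c / σ), x * phi x) = phi (c / σ) :=
    integral_Ioi_id_mul_phi (le_of_lt (div_pos hcpos hσ))
  have hderiv : HasDerivAt (fun s => α * (μ - (1 / Real.sqrt t) *
      (s * phi (c / s) -
        c * ((∫ x in Set.Ioi (0:ℝ), phi x) - ∫ u in (0:ℝ)..(c / s), phi u))))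
      (-(α / Real.sqrt t) * phi (c / σ)) σ := by
    have := (((hasDerivAt_G c σ hσ).const_mul (1 / Real.sqrt t)).const_sub μ).const_mul α
    refine this.congr_deriv ?_
    field_simp
  have heq : (fun s => Val α μ Δq s t) =ᶠ[nhds σ]
      (fun s => α * (μ - (1 / Real.sqrt t) *
        (s * phi (c / s) -
          c * ((∫ x in Set.Ioi (0:ℝ), phi x) - ∫ u in (0:ℝ)..(c / s), phi u)))) := by
    filter_upwards [eventually_gt_nhds hσ] with s hs
    unfold Val
    rw [← hc, integral_Ioi_lin c s hcpos hs]
  refine ⟨?_, ?_⟩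
  · rw [hint]
    exact hderiv.congr_of_eventuallyEq heq
  · rw [hint]
    have : 0 < (α / Real.sqrt t) * phi (c / σ) := mul_pos (div_pos hα hst) (phi_pos _)
    linarith
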